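/- Let r be a nonnegative integer, y > 0, and α a complex number with Re(α) < 1. Then ∫₀^∞ (u+1)^r u^{-α} e^{-yu} du = Γ(1-α) · ∑_{i=0}^{r} (-1)^i · binom(r,i) · (∏_{j=1}^{i} (α - j)) · y^{α-1-i}, the integral being absolutely convergent. (Equivalently, the analytically continued Whittaker function at a nonpositive integer second index satisfies W(y, α, -r) = ∑_{i=0}^{r} (-1)^i binom(r,i) (Γ(α)/Γ(α-i)) y^{r-i}, since Γ(α)/Γ(α-i) = ∏_{j=1}^{i}(α-j).) -/

import Mathlib

open MeasureTheory Finset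

-- term integrability
lemma aux_int (y : ℝ) (hy : 0 < y) (α : ℂ) (hα : α.re < 1) (i : ℕ) :
    IntegrableOn (fun u : ℝ => (u : ℂ) ^ ((i : ℂ) - α) * Complex.exp (-(y : ℂ) * u))
      (Set.Ioi 0) := by
  have h0 : IntegrableOn (fun u : ℝ => u ^ ((i : ℝ) - α.re) * Real.exp (-y * u))
      (Set.Ioi 0) := by
    have := integrableOn_rpow_mul_exp_neg_mul_rpow (p := 1) (s := (i : ℝ) - α.re) (b := y)
      (by have : (0:ℝ) ≤ i := Nat.cast_nonneg i; linarith) one_pos hy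
    refine this.congr_fun (fun x hx => ?_) measurableSet_Ioi
    simp only [Real.rpow_one]
  refine h0.mono' ?_ ?_
  · refine ContinuousOn.aestronglyMeasurable ?_ measurableSet_Ioi
    apply ContinuousOn.mul
    · apply continuousOn_of_forall_continuousAt
      intro x hx
      have : ContinuousAt (fun z : ℂ => z ^ ((i : ℂ) - α)) ↑x :=
        continuousAt_cpow_const <| Complex.ofReal_mem_slitPlane.2 hx
      exact this.comp Complex.continuous_ofReal.continuousAt
    · exact (Complex.continuous_exp.comp (by continuity)).continuousOn
  · filter_upwards [self_mem_ae_restrict measurableSet_Ioi] with x hx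
    have hx0 : (0:ℝ) < x := hx
    rw [norm_mul,
      Complex.norm_cpow_eq_rpow_re_of_pos hx0, Complex.norm_exp]
    apply le_of_eq
    rw [show (-(y:ℂ) * x).re = -y * x by simp, show ((i : ℂ) - α).re = (i : ℝ) - α.re by simp]

lemma aux_val (y : ℝ) (hy : 0 < y) (α : ℂ) (hα : α.re < 1) (i : ℕ) :
    (∫ u in Set.Ioi (0:ℝ), (u : ℂ) ^ ((i : ℂ) - α) * Complex.exp (-(y : ℂ) * u)) =
      Complex.Gamma ((i : ℂ) + 1 - α) * (y : ℂ) ^ (α - 1 - (i : ℂ)) := by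
  have ha : 0 < ((i : ℂ) + 1 - α).re := by
    simp only [Complex.sub_re, Complex.add_re, Complex.natCast_re, Complex.one_re]
    have : (0:ℝ) ≤ i := Nat.cast_nonneg i
    linarith
  have h := Complex.integral_cpow_mul_exp_neg_mul_Ioi ha hy
  have h2 : (∫ u in Set.Ioi (0:ℝ), (u : ℂ) ^ ((i : ℂ) - α) * Complex.exp (-(y : ℂ) * u)) =
      ∫ t in Set.Ioi (0:ℝ), (t : ℂ) ^ ((i : ℂ) + 1 - α - 1) * Complex.exp (-((y : ℂ) * t)) := by
    congr 1 with t
    rw [neg_mul]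
    ring_nf
  rw [h2, h]
  have hyne : (y : ℂ) ≠ 0 := Complex.ofReal_ne_zero.mpr hy.ne'
  rw [show (1 / (y:ℂ)) = ((y:ℂ))⁻¹ by ring, Complex.inv_cpow _ _ (by
      rw [Complex.arg_ofReal_of_nonneg hy.le]; positivity),
    ← Complex.cpow_neg, show -((i : ℂ) + 1 - α) = α - 1 - (i:ℂ) by ring, mul_comm]

lemma aux_gamma (α : ℂ) (hα : α.re < 1) (i : ℕ) :
    Complex.Gamma ((i : ℂ) + 1 - α) =
      Complex.Gamma (1 - α) * ∏ j ∈ Finset.Icc 1 i, ((j : ℂ) - α) := by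
  induction i with
  | zero => simp
  | succ n ih =>
    have hne : (n : ℂ) + 1 - α ≠ 0 := by
      intro h
      have := congrArg Complex.re h
      simp only [Complex.sub_re, Complex.add_re, Complex.natCast_re, Complex.one_re,
        Complex.zero_re] at this
      have : (0:ℝ) ≤ n := Nat.cast_nonneg n
      linarith [congrArg Complex.re h, Complex.zero_re]
    have : ((n + 1 : ℕ) : ℂ) + 1 - α = ((n : ℂ) + 1 - α) + 1 := by push_cast; ring
    rw [this, Complex.Gamma_add_one _ hne, ih, Finset.prod_Icc_succ_top (by omega)]
    push_cast
    ring

theorem stmt_9 (r : ℕ) (y : ℝ) (hy : 0 < y) (α : ℂ) (hα : α.re < 1) :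
    IntegrableOn (fun u : ℝ =>
      ((u : ℂ) + 1) ^ r * (u : ℂ) ^ (-α) * Complex.exp (-(y : ℂ) * u)) (Set.Ioi 0) ∧
    (∫ u in Set.Ioi (0 : ℝ),
        ((u : ℂ) + 1) ^ r * (u : ℂ) ^ (-α) * Complex.exp (-(y : ℂ) * u)) =
      Complex.Gamma (1 - α) *
        ∑ i ∈ Finset.range (r + 1),
          (-1 : ℂ) ^ i * (r.choose i : ℂ) * (∏ j ∈ Finset.Icc 1 i, (α - (j : ℂ))) *
            (y : ℂ) ^ (α - 1 - (i : ℂ)) := by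
  have hpt : ∀ u ∈ Set.Ioi (0:ℝ),
      ((u : ℂ) + 1) ^ r * (u : ℂ) ^ (-α) * Complex.exp (-(y : ℂ) * u) =
      ∑ i ∈ Finset.range (r + 1), (r.choose i : ℂ) *
        ((u : ℂ) ^ ((i : ℂ) - α) * Complex.exp (-(y : ℂ) * u)) := by
    intro u hu
    have hu0 : (0:ℝ) < u := hu
    have hune : (u : ℂ) ≠ 0 := Complex.ofReal_ne_zero.mpr hu0.ne'
    rw [add_pow, Finset.sum_mul, Finset.sum_mul]
    refine Finset.sum_congr rfl fun i hi => ?_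
    rw [show (i : ℂ) - α = (i : ℂ) + (-α) by ring, Complex.cpow_add _ _ hune,
      Complex.cpow_natCast]
    ring
  have hint : ∀ i ∈ Finset.range (r + 1), IntegrableOn
      (fun u : ℝ => (r.choose i : ℂ) *
        ((u : ℂ) ^ ((i : ℂ) - α) * Complex.exp (-(y : ℂ) * u))) (Set.Ioi 0) := by
    intro i _
    exact (aux_int y hy α hα i).const_mul _
  have hsum : IntegrableOn (fun u : ℝ =>
      ∑ i ∈ Finset.range (r + 1), (r.choose i : ℂ) *
        ((u : ℂ) ^ ((i : ℂ) - α) * Complex.exp (-(y : ℂ) * u))) (Set.Ioi 0) :=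
    integrable_finset_sum _ hint
  have hI : IntegrableOn (fun u : ℝ =>
      ((u : ℂ) + 1) ^ r * (u : ℂ) ^ (-α) * Complex.exp (-(y : ℂ) * u)) (Set.Ioi 0) := by
    refine hsum.congr_fun (fun x hx => (hpt x hx).symm) measurableSet_Ioi
  refine ⟨hI, ?_⟩
  rw [setIntegral_congr_fun measurableSet_Ioi hpt, integral_finset_sum _ hint,
    Finset.mul_sum]
  refine Finset.sum_congr rfl fun i _ => ?_
  rw [integral_const_mul, aux_val y hy α hα i, aux_gamma α hα i]
  have hprod : ∏ j ∈ Finset.Icc 1 i, ((j : ℂ) - α) =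
      (-1 : ℂ) ^ i * ∏ j ∈ Finset.Icc 1 i, (α - (j : ℂ)) := by
    rw [show (∏ j ∈ Finset.Icc 1 i, ((j : ℂ) - α)) = ∏ j ∈ Finset.Icc 1 i, -(α - (j:ℂ)) by
      refine Finset.prod_congr rfl fun j _ => by ring]
    rw [show (∏ j ∈ Finset.Icc 1 i, -(α - (j:ℂ))) =
        ∏ j ∈ Finset.Icc 1 i, (-1 : ℂ) * (α - (j:ℂ)) from
      Finset.prod_congr rfl fun j _ => by ring]
    rw [Finset.prod_mul_distrib, Finset.prod_const, Nat.card_Icc]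
    simp
  rw [hprod]
  ring
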